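/- Let $A$ be an integral domain and let $f = a_0 + a_1 x + \cdots + a_n x^n \in A[x]$ be divisible by $p^m$ for some $p \in A[x]$ and $m \in \mathbb{N}$. Then for any integers $z_1, z_2 \in \mathbb{Z}$ and any $k \in \mathbb{N}$ with $k \le m$, the polynomial $\sum_{r=0}^n \binom{z_1 + z_2 r}{k} a_r x^r$ is divisible by $p^{m-k}$ in $A[x]$. -/

import Mathlib

open Polynomial Finset fwdDiff Function

/-- Generalized binomial coefficient `z.choose k` for an integer `z`:
`z (z-1) ⋯ (z-k+1) / k!`, which is an integer. -/
def intChoose (z : ℤ) (k : ℕ) : ℤ :=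
  if 0 ≤ z then (z.toNat.choose k : ℤ)
  else (-1) ^ k * (((k : ℤ) - 1 - z).toNat.choose k : ℤ)

lemma factorial_mul_intChoose (z : ℤ) (k : ℕ) :
    (k.factorial : ℤ) * intChoose z k = (descPochhammer ℤ k).eval z := by
  unfold intChoose
  split_ifs with h
  · rw [show z = (z.toNat : ℤ) from (Int.toNat_of_nonneg h).symm,
      descPochhammer_eval_eq_descFactorial ℤ z.toNat k,
      Nat.descFactorial_eq_factorial_mul_choose]
    push_cast [Int.toNat_natCast]; ring
  · push_neg at h
    have h1 : (descPochhammer ℤ k).eval z = (-1)^k * (ascPochhammer ℤ k).eval (-z) := by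
      rw [ascPochhammer_eval_neg_eq_descPochhammer, ← mul_assoc, ← mul_pow]
      norm_num
    have h2 : (ascPochhammer ℤ k).eval (-z) = (descPochhammer ℤ k).eval (-z + k - 1) := by
      rw [descPochhammer_eval_eq_ascPochhammer]; ring_nf
    have h3 : (-z + (k:ℤ) - 1) = ((((k:ℤ) - 1 - z).toNat : ℤ)) := by
      rw [Int.toNat_of_nonneg (by omega)]; ring
    rw [h1, h2, h3, descPochhammer_eval_eq_descFactorial ℤ _ k,
      Nat.descFactorial_eq_factorial_mul_choose]
    push_cast; ring

lemma natDegree_comp_X_add_one_sub_le (q : ℤ[X]) (d : ℕ) (hq : q.natDegree ≤ d + 1) :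
    (q.comp (X + 1) - q).natDegree ≤ d := by
  rw [natDegree_le_iff_coeff_eq_zero]
  intro e he
  have hcomp : (q.comp (X + 1)).natDegree ≤ d + 1 := by
    refine (natDegree_comp_le).trans ?_
    have : (X + 1 : ℤ[X]).natDegree ≤ 1 := by
      refine (natDegree_add_le _ _).trans ?_
      simp
    calc q.natDegree * (X + 1 : ℤ[X]).natDegree ≤ (d+1) * 1 :=
          Nat.mul_le_mul hq this
      _ = d + 1 := by ring
  rcases lt_or_eq_of_le (Nat.succ_le_of_lt he) with h | h
  · rw [coeff_sub, coeff_eq_zero_of_natDegree_lt (lt_of_le_of_lt hcomp h),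
      coeff_eq_zero_of_natDegree_lt (lt_of_le_of_lt hq h), sub_zero]
  · subst h
    rw [coeff_sub, show (X + 1 : ℤ[X]) = X + C 1 by simp, ← taylor_apply, taylor_coeff]
    have hd : (hasseDeriv (d+1) q).natDegree = 0 := by
      have := natDegree_hasseDeriv_le q (d+1)
      omega
    rw [eq_C_of_natDegree_eq_zero hd, hasseDeriv_coeff]
    simp

lemma fwdDiff_iter_zero_fun (j : ℕ) (x : ℤ) : (Δ_[(1:ℤ)])^[j] (fun _ : ℤ => (0:ℤ)) x = 0 := by
  induction j generalizing x with
  | zero => rfl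
  | succ j ih => rw [iterate_succ_apply']; simp [fwdDiff, ih]

lemma fwdDiff_eval (q : ℤ[X]) (x : ℤ) :
    Δ_[(1:ℤ)] (fun y : ℤ => q.eval y) x = (q.comp (X + 1) - q).eval x := by
  simp [fwdDiff, eval_comp]

lemma fwdDiff_iter_eval_eq_zero (d : ℕ) :
    ∀ (q : ℤ[X]), q.natDegree ≤ d → ∀ j, d < j → ∀ x : ℤ,
      (Δ_[(1:ℤ)])^[j] (fun y : ℤ => q.eval y) x = 0 := by
  induction d with
  | zero =>
    intro q hq j hj x
    obtain ⟨j, rfl⟩ := Nat.exists_eq_succ_of_ne_zero (by omega : j ≠ 0)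
    rw [iterate_succ_apply]
    have hc : (fun y : ℤ => q.eval y) = fun _ : ℤ => q.coeff 0 := by
      funext y
      rw [eq_C_of_natDegree_le_zero hq]; simp
    rw [hc, fwdDiff_const]
    exact fwdDiff_iter_zero_fun j x
  | succ d ih =>
    intro q hq j hj x
    obtain ⟨j, rfl⟩ := Nat.exists_eq_succ_of_ne_zero (by omega : j ≠ 0)
    rw [iterate_succ_apply]
    have : Δ_[(1:ℤ)] (fun y : ℤ => q.eval y) = fun y : ℤ => (q.comp (X+1) - q).eval y := by
      funext y; exact fwdDiff_eval q y
    rw [this]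
    exact ih _ (natDegree_comp_X_add_one_sub_le q d hq) j (by omega) x

lemma fwdDiff_iter_cast_compat (a : ℤ) (g : ℕ → ℤ) (F : ℤ → ℤ)
    (hF : ∀ n : ℕ, F n = a * g n) (j : ℕ) :
    ∀ n : ℕ, (Δ_[(1:ℤ)])^[j] F n = a * (Δ_[(1:ℕ)])^[j] g n := by
  induction j generalizing g F with
  | zero => simpa using hF
  | succ j ih =>
    intro n
    rw [iterate_succ_apply, iterate_succ_apply]
    refine ih _ _ (fun n => ?_) n
    have h1 : ((n:ℤ) + 1) = ((n+1 : ℕ) : ℤ) := by push_cast; ring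
    simp only [fwdDiff, h1, hF]
    ring

lemma key_coeffs (z₁ z₂ : ℤ) (k : ℕ) :
    ∃ c : ℕ → ℤ, (∀ j, k < j → c j = 0) ∧
      ∀ r : ℕ, intChoose (z₁ + z₂ * r) k = ∑ j ∈ Finset.range (r + 1), r.choose j • c j := by
  set g : ℕ → ℤ := fun r => intChoose (z₁ + z₂ * r) k with hg
  set Q : ℤ[X] := (descPochhammer ℤ k).comp (C z₁ + C z₂ * X) with hQ
  have hQdeg : Q.natDegree ≤ k := by
    refine natDegree_comp_le.trans ?_
    have h1 : (C z₁ + C z₂ * X : ℤ[X]).natDegree ≤ 1 := by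
      refine (natDegree_add_le _ _).trans ?_
      simp only [natDegree_C, max_le_iff]
      exact ⟨Nat.zero_le _, (natDegree_mul_le).trans (by simp)⟩
    calc (descPochhammer ℤ k).natDegree * (C z₁ + C z₂ * X : ℤ[X]).natDegree
        ≤ k * 1 := Nat.mul_le_mul (le_of_eq (descPochhammer_natDegree ℤ k)) h1
      _ = k := by ring
  have hQeval : ∀ r : ℕ, Q.eval (r : ℤ) = (k.factorial : ℤ) * g r := by
    intro r
    rw [hQ, eval_comp]
    simp only [eval_add, eval_mul, eval_C, eval_X]
    rw [← factorial_mul_intChoose]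
  refine ⟨fun j => (Δ_[(1:ℕ)])^[j] g 0, fun j hj => ?_, fun r => ?_⟩
  · have h0 := fwdDiff_iter_eval_eq_zero k Q hQdeg j hj 0
    have h1 := fwdDiff_iter_cast_compat (k.factorial : ℤ) g (fun y : ℤ => Q.eval y) hQeval j 0
    rw [Nat.cast_zero, h0] at h1
    have : (k.factorial : ℤ) ≠ 0 := by positivity
    exact (mul_eq_zero.mp h1.symm).resolve_left this
  · have := shift_eq_sum_fwdDiff_iter (1 : ℕ) g r 0
    simpa using this

section HasseDvd
variable {A : Type*} [CommRing A]

lemma pow_dvd_hasseDeriv_pow (p : A[X]) (m : ℕ) :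
    ∀ i : ℕ, p ^ (m - i) ∣ hasseDeriv i (p ^ m) := by
  induction m with
  | zero => intro i; simp
  | succ m ih =>
    intro i
    rw [pow_succ, mul_comm, hasseDeriv_mul]
    refine Finset.dvd_sum ?_
    rintro ⟨a, b⟩ hab
    rw [Finset.HasAntidiagonal.mem_antidiagonal] at hab
    rcases Nat.eq_zero_or_pos a with ha | ha
    · subst ha
      simp only [Nat.zero_add] at hab
      subst hab
      rw [hasseDeriv_zero']
      calc p ^ (m + 1 - b) ∣ p ^ (1 + (m - b)) := pow_dvd_pow p (by omega)
        _ = p * p ^ (m - b) := by rw [pow_add, pow_one]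
        _ ∣ p * hasseDeriv b (p ^ m) := mul_dvd_mul_left p (ih b)
    · calc p ^ (m + 1 - i) ∣ p ^ (m - b) := pow_dvd_pow p (by omega)
        _ ∣ hasseDeriv b (p ^ m) := ih b
        _ ∣ hasseDeriv a p * hasseDeriv b (p ^ m) := dvd_mul_left _ _

lemma pow_dvd_hasseDeriv {p f : A[X]} {m : ℕ} (h : p ^ m ∣ f) (i : ℕ) :
    p ^ (m - i) ∣ hasseDeriv i f := by
  obtain ⟨g, rfl⟩ := h
  rw [hasseDeriv_mul]
  refine Finset.dvd_sum ?_
  rintro ⟨a, b⟩ hab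
  rw [Finset.HasAntidiagonal.mem_antidiagonal] at hab
  calc p ^ (m - i) ∣ p ^ (m - a) := pow_dvd_pow p (by omega)
    _ ∣ hasseDeriv a (p ^ m) := pow_dvd_hasseDeriv_pow p m a
    _ ∣ hasseDeriv a (p ^ m) * hasseDeriv b g := dvd_mul_right _ _

end HasseDvd

/-- If `f = a₀ + a₁ x + ⋯ + aₙ xⁿ ∈ A[x]` is divisible by `p ^ m`, then for any
`z₁ z₂ : ℤ` and `k ≤ m`, the polynomial `∑ r, (z₁ + z₂ r).choose k • aᵣ xʳ`
is divisible by `p ^ (m - k)`. -/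
theorem stmt0 {A : Type*} [CommRing A] [IsDomain A]
    (n m : ℕ) (a : ℕ → A) (p : Polynomial A)
    (hdiv : p ^ m ∣ ∑ r ∈ Finset.range (n + 1), Polynomial.C (a r) * Polynomial.X ^ r)
    (z₁ z₂ : ℤ) (k : ℕ) (hk : k ≤ m) :
    p ^ (m - k) ∣ ∑ r ∈ Finset.range (n + 1),
      Polynomial.C (intChoose (z₁ + z₂ * (r : ℤ)) k • a r) * Polynomial.X ^ r := by
  obtain ⟨c, hc0, hcr⟩ := key_coeffs z₁ z₂ k
  set f : A[X] := ∑ r ∈ Finset.range (n + 1), C (a r) * X ^ r with hf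
  -- the coefficient identity, extended to a sum over `range (k+1)`
  have hsum : ∀ r : ℕ, intChoose (z₁ + z₂ * r) k
      = ∑ j ∈ Finset.range (k + 1), (r.choose j : ℤ) * c j := by
    intro r
    rw [hcr r]
    have e1 : ∑ j ∈ Finset.range (r + 1), r.choose j • c j
        = ∑ j ∈ Finset.range (max r k + 1), (r.choose j : ℤ) * c j := by
      simp only [nsmul_eq_mul]
      refine Finset.sum_subset ?_ ?_
      · exact Finset.range_subset_range.mpr (by omega)
      · intro x hx hx'
        rw [Finset.mem_range] at hx hx'
        rw [Nat.choose_eq_zero_of_lt (by omega)]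
        simp
    have e2 : ∑ j ∈ Finset.range (k + 1), (r.choose j : ℤ) * c j
        = ∑ j ∈ Finset.range (max r k + 1), (r.choose j : ℤ) * c j := by
      refine Finset.sum_subset ?_ ?_
      · exact Finset.range_subset_range.mpr (by omega)
      · intro x hx hx'
        rw [Finset.mem_range] at hx hx'
        rw [hc0 x (by omega)]
        simp
    rw [e1, ← e2]
  -- per-term identity
  have hterm : ∀ j r : ℕ, C ((c j : A)) * (X ^ j * hasseDeriv j (C (a r) * X ^ r))
      = C ((((r.choose j : ℤ) * c j : ℤ) : A)) * (C (a r) * X ^ r) := by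
    intro j r
    rw [C_mul_X_pow_eq_monomial, hasseDeriv_monomial]
    rcases le_or_gt j r with h | h
    · rw [← C_mul_X_pow_eq_monomial, ← C_mul_X_pow_eq_monomial]
      have hx : (X : A[X]) ^ j * X ^ (r - j) = X ^ r := by
        rw [← pow_add, show j + (r - j) = r by omega]
      calc C ((c j : A)) * (X ^ j * (C ((r.choose j : A) * a r) * X ^ (r - j)))
          = C ((c j : A)) * C ((r.choose j : A) * a r) * (X ^ j * X ^ (r - j)) := by ring
        _ = C ((((r.choose j : ℤ) * c j : ℤ) : A)) * (C (a r) * X ^ r) := by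
            rw [hx]; push_cast [map_mul]; ring
    · rw [Nat.choose_eq_zero_of_lt h]
      simp
  -- main rewriting
  have main : (∑ r ∈ Finset.range (n + 1), C (intChoose (z₁ + z₂ * (r : ℤ)) k • a r) * X ^ r)
      = ∑ j ∈ Finset.range (k + 1), C ((c j : A)) * (X ^ j * hasseDeriv j f) := by
    have hrhs : ∀ j, C ((c j : A)) * (X ^ j * hasseDeriv j f)
        = ∑ r ∈ Finset.range (n + 1),
            C ((((r.choose j : ℤ) * c j : ℤ) : A)) * (C (a r) * X ^ r) := by
      intro j
      rw [hf, map_sum (hasseDeriv j), Finset.mul_sum, Finset.mul_sum]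
      exact Finset.sum_congr rfl fun r _ => hterm j r
    rw [Finset.sum_congr rfl fun j _ => hrhs j, Finset.sum_comm]
    refine Finset.sum_congr rfl fun r _ => ?_
    have : ∑ j ∈ Finset.range (k + 1), C ((((r.choose j : ℤ) * c j : ℤ) : A)) * (C (a r) * X ^ r)
        = C (((∑ j ∈ Finset.range (k + 1), (r.choose j : ℤ) * c j : ℤ) : A)) * (C (a r) * X ^ r) := by
      rw [← Finset.sum_mul, ← map_sum, Int.cast_sum]
    rw [this, ← hsum r, zsmul_eq_mul, map_mul]
    ring
  rw [main]
  refine Finset.dvd_sum fun j hj => ?_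
  rw [Finset.mem_range] at hj
  have h1 : p ^ (m - j) ∣ hasseDeriv j f := pow_dvd_hasseDeriv hdiv j
  have h2 : p ^ (m - k) ∣ hasseDeriv j f := (pow_dvd_pow p (by omega)).trans h1
  exact Dvd.dvd.mul_left (h2.mul_left (X ^ j)) _
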